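/- Suppose on the tangent bundle of a manifold one has endomorphism fields J, P and tensors G = ∇̃J, H = ∇̃P satisfying P² = Id, J² = −Id, PJ = −JP, PG(X,Y) + G(PX,PY) = 0, and G(X,PY) + PG(X,Y) = −2JH(X,Y). Then H(X,PY) + PH(X,Y) = 0 for all X, Y. -/
import Mathlib


/-- if `P² = Id`, `J² = -Id`, `PJ = -JP`,
`PG(X,Y) + G(PX,PY) = 0` and `G(X,PY) + PG(X,Y) = -2JH(X,Y)`,
then `H(X,PY) + PH(X,Y) = 0`. -/
theorem NK_H_P_anticommute {V : Type*} [AddCommGroup V] [Module ℝ V]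
    (J P : V →ₗ[ℝ] V) (G H : V → V → V)
    (hP2 : ∀ X, P (P X) = X)
    (hJ2 : ∀ X, J (J X) = -X)
    (hPJ : ∀ X, P (J X) = -(J (P X)))
    (h9 : ∀ X Y, P (G X Y) + G (P X) (P Y) = 0)
    (h11 : ∀ X Y, G X (P Y) + P (G X Y) = -((2 : ℝ) • J (H X Y))) :
    ∀ X Y, H X (P Y) + P (H X Y) = 0 := by
  intro X Y
  -- h11 with Y ↦ P Y
  have h1 : G X Y + P (G X (P Y)) = -((2 : ℝ) • J (H X (P Y))) := by
    have := h11 X (P Y); rwa [hP2] at this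
  -- apply P to h11
  have h2 : P (G X (P Y)) + G X Y = (2 : ℝ) • J (P (H X Y)) := by
    have := congrArg P (h11 X Y)
    simpa [map_add, map_neg, map_smul, hP2, hPJ, neg_neg] using this
  have hJ : J (H X (P Y) + P (H X Y)) = 0 := by
    have : -((2:ℝ) • J (H X (P Y))) = (2:ℝ) • J (P (H X Y)) := by
      rw [← h1, ← h2]; abel
    have h3 : (2:ℝ) • (J (H X (P Y)) + J (P (H X Y))) = 0 := by
      rw [smul_add]
      linear_combination (norm := abel) -this
    have := smul_eq_zero.mp h3
    simpa [map_add] using this.resolve_left (by norm_num)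
  have := congrArg J hJ
  rw [hJ2] at this
  have h5 : -P (H X Y) + -H X (P Y) = 0 := by simpa using this
  linear_combination (norm := abel) -h5
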